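/- An admissible tensor F on V satisfies the paracontact condition 2g(x,φy) = −F(x,φy,ξ) − F(y,φx,ξ) for all x,y ∈ V if and only if F = F₁ + F₂ + F₃ + F₄' + F₇ + F₈ + F₁₀, where F₁, F₂, F₃, F₇, F₈, F₁₀ are the components of F and F₄'(x,y,z) = −g(φx,φy)η(z) − g(φx,φz)η(y) (the F₄ component with θ(ξ) = −2n). -/
import Mathlib


open scoped RealInnerProductSpace

noncomputable section

/-- An almost paracontact almost paracomplex structure compatible with the inner
product on a real inner product space `V` of dimension `2 * n + 1`. -/
structure APAP (n : ℕ) (V : Type*) [NormedAddCommGroup V] [InnerProductSpace ℝ V] where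
  phi : V →ₗ[ℝ] V
  xi : V
  eta : V →ₗ[ℝ] ℝ
  dim_eq : Module.finrank ℝ V = 2 * n + 1
  phi_xi : phi xi = 0
  phi_phi : ∀ x : V, phi (phi x) = x - eta x • xi
  eta_phi : ∀ x : V, eta (phi x) = 0
  eta_xi : eta xi = 1
  trace_phi : LinearMap.trace ℝ V phi = 0
  compat : ∀ x y : V, ⟪phi x, phi y⟫ = ⟪x, y⟫ - eta x * eta y
  inner_xi : ∀ x : V, ⟪x, xi⟫ = eta x

variable {n : ℕ} {V : Type*} [NormedAddCommGroup V] [InnerProductSpace ℝ V]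

/-- The defining symmetries of the fundamental tensor `F`. -/
def APAP.Admissible (S : APAP n V) (F : V →ₗ[ℝ] V →ₗ[ℝ] V →ₗ[ℝ] ℝ) : Prop :=
  (∀ x y z : V, F x y z = F x z y) ∧
  (∀ x y z : V, F x y z =
    -F x (S.phi y) (S.phi z) + S.eta y * F x S.xi z + S.eta z * F x y S.xi)

/-- The Nijenhuis tensor of `F`. -/
def APAP.nij (S : APAP n V) (F : V →ₗ[ℝ] V →ₗ[ℝ] V →ₗ[ℝ] ℝ) (x y z : V) : ℝ :=
  F (S.phi x) y z - F (S.phi y) x z - F x y (S.phi z) + F y x (S.phi z)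
    + S.eta z * (F x (S.phi y) S.xi - F y (S.phi x) S.xi)

/-- The associated Nijenhuis tensor of `F`. -/
def APAP.nijA (S : APAP n V) (F : V →ₗ[ℝ] V →ₗ[ℝ] V →ₗ[ℝ] ℝ) (x y z : V) : ℝ :=
  F (S.phi x) y z + F (S.phi y) x z - F x y (S.phi z) - F y x (S.phi z)
    + S.eta z * (F x (S.phi y) S.xi + F y (S.phi x) S.xi)

/-- The Lee form `θ` of `F` with respect to an orthonormal basis. -/
def APAP.leeTheta (S : APAP n V) (b : OrthonormalBasis (Fin (2 * n + 1)) ℝ V)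
    (F : V →ₗ[ℝ] V →ₗ[ℝ] V →ₗ[ℝ] ℝ) (z : V) : ℝ :=
  ∑ i, F (b i) (b i) z

/-- The Lee form `θ*` of `F` with respect to an orthonormal basis. -/
def APAP.leeThetaStar (S : APAP n V) (b : OrthonormalBasis (Fin (2 * n + 1)) ℝ V)
    (F : V →ₗ[ℝ] V →ₗ[ℝ] V →ₗ[ℝ] ℝ) (z : V) : ℝ :=
  ∑ i, F (b i) (S.phi (b i)) z

/-- The Lee form `ω` of `F`. -/
def APAP.leeOmega (S : APAP n V) (F : V →ₗ[ℝ] V →ₗ[ℝ] V →ₗ[ℝ] ℝ) (z : V) : ℝ :=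
  F S.xi S.xi z

/-- The component `F₁` of `F`. -/
def APAP.comp1 (S : APAP n V) (b : OrthonormalBasis (Fin (2 * n + 1)) ℝ V)
    (F : V →ₗ[ℝ] V →ₗ[ℝ] V →ₗ[ℝ] ℝ) (x y z : V) : ℝ :=
  (1 / (2 * (n : ℝ))) *
    (⟪S.phi x, S.phi y⟫ * S.leeTheta b F (S.phi (S.phi z))
      + ⟪S.phi x, S.phi z⟫ * S.leeTheta b F (S.phi (S.phi y))
      - ⟪x, S.phi y⟫ * S.leeTheta b F (S.phi z)
      - ⟪x, S.phi z⟫ * S.leeTheta b F (S.phi y))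

/-- The component `F₂` of `F`. -/
def APAP.comp2 (S : APAP n V) (b : OrthonormalBasis (Fin (2 * n + 1)) ℝ V)
    (F : V →ₗ[ℝ] V →ₗ[ℝ] V →ₗ[ℝ] ℝ) (x y z : V) : ℝ :=
  (1 / 4) * (2 * F (S.phi (S.phi x)) (S.phi (S.phi y)) (S.phi (S.phi z))
      + F (S.phi (S.phi y)) (S.phi (S.phi z)) (S.phi (S.phi x))
      + F (S.phi (S.phi z)) (S.phi (S.phi x)) (S.phi (S.phi y))
      - F (S.phi y) (S.phi z) (S.phi (S.phi x))
      - F (S.phi z) (S.phi y) (S.phi (S.phi x)))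
    - S.comp1 b F x y z

/-- The component `F₃` of `F`. -/
def APAP.comp3 (S : APAP n V)
    (F : V →ₗ[ℝ] V →ₗ[ℝ] V →ₗ[ℝ] ℝ) (x y z : V) : ℝ :=
  (1 / 4) * (2 * F (S.phi (S.phi x)) (S.phi (S.phi y)) (S.phi (S.phi z))
      - F (S.phi (S.phi y)) (S.phi (S.phi z)) (S.phi (S.phi x))
      - F (S.phi (S.phi z)) (S.phi (S.phi x)) (S.phi (S.phi y))
      + F (S.phi y) (S.phi z) (S.phi (S.phi x))
      + F (S.phi z) (S.phi y) (S.phi (S.phi x)))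

/-- The component `F₄` of `F`. -/
def APAP.comp4 (S : APAP n V) (b : OrthonormalBasis (Fin (2 * n + 1)) ℝ V)
    (F : V →ₗ[ℝ] V →ₗ[ℝ] V →ₗ[ℝ] ℝ) (x y z : V) : ℝ :=
  (S.leeTheta b F S.xi / (2 * (n : ℝ))) *
    (⟪S.phi x, S.phi y⟫ * S.eta z + ⟪S.phi x, S.phi z⟫ * S.eta y)

/-- The component `F₅` of `F`. -/
def APAP.comp5 (S : APAP n V) (b : OrthonormalBasis (Fin (2 * n + 1)) ℝ V)
    (F : V →ₗ[ℝ] V →ₗ[ℝ] V →ₗ[ℝ] ℝ) (x y z : V) : ℝ :=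
  (S.leeThetaStar b F S.xi / (2 * (n : ℝ))) *
    (⟪x, S.phi y⟫ * S.eta z + ⟪x, S.phi z⟫ * S.eta y)

/-- The component `F₆` of `F`. -/
def APAP.comp6 (S : APAP n V) (b : OrthonormalBasis (Fin (2 * n + 1)) ℝ V)
    (F : V →ₗ[ℝ] V →ₗ[ℝ] V →ₗ[ℝ] ℝ) (x y z : V) : ℝ :=
  (1 / 4) * ((F (S.phi (S.phi x)) (S.phi (S.phi y)) S.xi + F (S.phi (S.phi y)) (S.phi (S.phi x)) S.xi
        + F (S.phi x) (S.phi y) S.xi + F (S.phi y) (S.phi x) S.xi) * S.eta z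
      + (F (S.phi (S.phi x)) (S.phi (S.phi z)) S.xi + F (S.phi (S.phi z)) (S.phi (S.phi x)) S.xi
        + F (S.phi x) (S.phi z) S.xi + F (S.phi z) (S.phi x) S.xi) * S.eta y)
    - S.comp4 b F x y z - S.comp5 b F x y z

/-- The component `F₇` of `F`. -/
def APAP.comp7 (S : APAP n V)
    (F : V →ₗ[ℝ] V →ₗ[ℝ] V →ₗ[ℝ] ℝ) (x y z : V) : ℝ :=
  (1 / 4) * ((F (S.phi (S.phi x)) (S.phi (S.phi y)) S.xi - F (S.phi (S.phi y)) (S.phi (S.phi x)) S.xi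
        + F (S.phi x) (S.phi y) S.xi - F (S.phi y) (S.phi x) S.xi) * S.eta z
      + (F (S.phi (S.phi x)) (S.phi (S.phi z)) S.xi - F (S.phi (S.phi z)) (S.phi (S.phi x)) S.xi
        + F (S.phi x) (S.phi z) S.xi - F (S.phi z) (S.phi x) S.xi) * S.eta y)

/-- The component `F₈` of `F`. -/
def APAP.comp8 (S : APAP n V)
    (F : V →ₗ[ℝ] V →ₗ[ℝ] V →ₗ[ℝ] ℝ) (x y z : V) : ℝ :=
  (1 / 4) * ((F (S.phi (S.phi x)) (S.phi (S.phi y)) S.xi + F (S.phi (S.phi y)) (S.phi (S.phi x)) S.xi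
        - F (S.phi x) (S.phi y) S.xi - F (S.phi y) (S.phi x) S.xi) * S.eta z
      + (F (S.phi (S.phi x)) (S.phi (S.phi z)) S.xi + F (S.phi (S.phi z)) (S.phi (S.phi x)) S.xi
        - F (S.phi x) (S.phi z) S.xi - F (S.phi z) (S.phi x) S.xi) * S.eta y)

/-- The component `F₉` of `F`. -/
def APAP.comp9 (S : APAP n V)
    (F : V →ₗ[ℝ] V →ₗ[ℝ] V →ₗ[ℝ] ℝ) (x y z : V) : ℝ :=
  (1 / 4) * ((F (S.phi (S.phi x)) (S.phi (S.phi y)) S.xi - F (S.phi (S.phi y)) (S.phi (S.phi x)) S.xi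
        - F (S.phi x) (S.phi y) S.xi + F (S.phi y) (S.phi x) S.xi) * S.eta z
      + (F (S.phi (S.phi x)) (S.phi (S.phi z)) S.xi - F (S.phi (S.phi z)) (S.phi (S.phi x)) S.xi
        - F (S.phi x) (S.phi z) S.xi + F (S.phi z) (S.phi x) S.xi) * S.eta y)

/-- The component `F₁₀` of `F`. -/
def APAP.comp10 (S : APAP n V)
    (F : V →ₗ[ℝ] V →ₗ[ℝ] V →ₗ[ℝ] ℝ) (x y z : V) : ℝ :=
  S.eta x * F S.xi (S.phi (S.phi y)) (S.phi (S.phi z))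

/-- The component `F₁₁` of `F`. -/
def APAP.comp11 (S : APAP n V)
    (F : V →ₗ[ℝ] V →ₗ[ℝ] V →ₗ[ℝ] ℝ) (x y z : V) : ℝ :=
  S.eta x * (S.eta y * S.leeOmega F z + S.eta z * S.leeOmega F y)

/-- The component `F₄'` (`F₄` with `θ(ξ) = -2n`). -/
def APAP.comp4' (S : APAP n V) (x y z : V) : ℝ :=
  -⟪S.phi x, S.phi y⟫ * S.eta z - ⟪S.phi x, S.phi z⟫ * S.eta y

set_option maxHeartbeats 1600000 in
lemma hdiff_aux (S : APAP n V) (b : OrthonormalBasis (Fin (2 * n + 1)) ℝ V)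
    (F : V →ₗ[ℝ] V →ₗ[ℝ] V →ₗ[ℝ] ℝ)
    (hsym : ∀ x y z : V, F x y z = F x z y)
    (hx0 : ∀ x : V, F x S.xi S.xi = 0) (x y z : V) :
    S.comp1 b F x y z + S.comp2 b F x y z + S.comp3 F x y z
        + S.comp4' x y z + S.comp7 F x y z + S.comp8 F x y z + S.comp10 F x y z
      - F x y z
    = -(1/2) * ((F x y S.xi + F (S.phi y) (S.phi x) S.xi + S.eta x * F S.xi S.xi y
          + 2 * ⟪S.phi x, S.phi y⟫) * S.eta z
        + (F x z S.xi + F (S.phi z) (S.phi x) S.xi + S.eta x * F S.xi S.xi z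
          + 2 * ⟪S.phi x, S.phi z⟫) * S.eta y) := by
  simp only [APAP.comp1, APAP.comp2, APAP.comp3, APAP.comp4', APAP.comp7, APAP.comp8,
    APAP.comp10, S.phi_phi, map_sub, map_smul, LinearMap.sub_apply, LinearMap.smul_apply,
    smul_eq_mul]
  linear_combination (-(S.eta y)) * hsym x S.xi z
    + (1/2) * (S.eta x * S.eta z) * hsym S.xi S.xi y
    - (1/2) * (S.eta x * S.eta y) * hsym S.xi z S.xi
    + (S.eta x * S.eta y * S.eta z) * hx0 S.xi

/-- the paracontact condition holds iff
`F = F₁ + F₂ + F₃ + F₄' + F₇ + F₈ + F₁₀`. -/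
theorem statement14 (hn : 1 ≤ n) (S : APAP n V)
    (b : OrthonormalBasis (Fin (2 * n + 1)) ℝ V)
    (F : V →ₗ[ℝ] V →ₗ[ℝ] V →ₗ[ℝ] ℝ) (hF : S.Admissible F) :
    (∀ x y : V, 2 * ⟪x, S.phi y⟫ = -F x (S.phi y) S.xi - F y (S.phi x) S.xi) ↔
      (∀ x y z : V, F x y z = S.comp1 b F x y z + S.comp2 b F x y z + S.comp3 F x y z
        + S.comp4' x y z + S.comp7 F x y z + S.comp8 F x y z + S.comp10 F x y z) := by

  obtain ⟨hsym, hax⟩ := hF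
  have hx0 : ∀ x : V, F x S.xi S.xi = 0 := by
    intro x
    have h := hax x S.xi S.xi
    simp only [S.phi_xi, map_zero, LinearMap.zero_apply, S.eta_xi, one_mul, neg_zero,
      zero_add] at h
    linarith
  have hd := hdiff_aux S b F hsym hx0
  constructor
  · intro hP x y z
    -- ω vanishes on the image of φ
    have hwphi : ∀ u : V, F S.xi S.xi (S.phi u) = 0 := by
      intro u
      have h := hP S.xi u
      have h1 : ⟪S.xi, S.phi u⟫ = (0 : ℝ) := by
        rw [real_inner_comm, S.inner_xi, S.eta_phi]
      rw [h1, S.phi_xi, map_zero, LinearMap.zero_apply] at h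
      have h2 : F S.xi (S.phi u) S.xi = 0 := by linarith
      rw [hsym S.xi S.xi (S.phi u)]
      exact h2
    have hw : ∀ u : V, F S.xi S.xi u = 0 := by
      intro u
      have h := hwphi (S.phi u)
      rw [S.phi_phi, map_sub, map_smul, smul_eq_mul, hx0 S.xi, mul_zero, sub_zero] at h
      exact h
    have hkey : ∀ u v : V, F u v S.xi + F (S.phi v) (S.phi u) S.xi
        = -2 * ⟪S.phi u, S.phi v⟫ := by
      intro u v
      have h := hP u (S.phi v)
      rw [S.phi_phi] at h
      have h1 : ⟪u, v - S.eta v • S.xi⟫ = ⟪S.phi u, S.phi v⟫ := by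
        rw [inner_sub_right, real_inner_smul_right, S.inner_xi, S.compat]
        ring
      rw [h1, map_sub, map_smul, LinearMap.sub_apply, LinearMap.smul_apply, smul_eq_mul,
        hx0 u] at h
      linarith
    have h := hd x y z
    rw [hkey x y, hkey x z, hw y, hw z] at h
    linarith [h]
  · intro hQ x y
    have hG : ∀ u v : V, F u v S.xi + F (S.phi v) (S.phi u) S.xi + S.eta u * F S.xi S.xi v
        + 2 * ⟪S.phi u, S.phi v⟫ = 0 := by
      intro u v
      have h := hd u v S.xi
      rw [← hQ u v S.xi] at h
      have h2 := hd u v v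
      rw [← hQ u v v] at h2
      -- from h : 0 = -(1/2)*(G u v * 1 + G u ξ * η v)
      have hGxi : F u S.xi S.xi + F (S.phi S.xi) (S.phi u) S.xi
          + S.eta u * F S.xi S.xi S.xi + 2 * ⟪S.phi u, S.phi S.xi⟫ = 0 := by
        simp only [hx0 u, hx0 S.xi, S.phi_xi, map_zero, LinearMap.zero_apply,
          inner_zero_right, mul_zero, zero_mul, add_zero, zero_add]
      rw [S.eta_xi] at h
      nlinarith [h, hGxi]
    have hw : ∀ u : V, F S.xi S.xi u = 0 := by
      intro u
      have h := hG S.xi u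
      simp only [S.phi_xi, map_zero, LinearMap.zero_apply, inner_zero_left, S.eta_xi,
        hsym S.xi u S.xi, one_mul, mul_zero, add_zero] at h
      linarith
    have hsa : ⟪S.phi x, y⟫ = ⟪x, S.phi y⟫ := by
      have h0 := S.compat x (S.phi y)
      simp only [S.phi_phi y, inner_sub_right, real_inner_smul_right, S.inner_xi,
        S.eta_phi, mul_zero, sub_zero] at h0
      exact h0
    have h := hG x (S.phi y)
    have h2 : F S.xi (S.phi x) S.xi = 0 := by
      rw [hsym S.xi (S.phi x) S.xi]; exact hw (S.phi x)
    simp only [hw (S.phi y), S.phi_phi, map_sub, map_smul, LinearMap.sub_apply,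
      LinearMap.smul_apply, smul_eq_mul, inner_sub_right, real_inner_smul_right,
      S.inner_xi, S.eta_phi, mul_zero, sub_zero, add_zero, h2, hsa] at h
    linarith
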